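/- Let b ∈ ℂ with b ≠ ±1 and b + \overline{b} ≠ 0. Define b₁ = (2b\overline{b} + b − \overline{b})/(b + \overline{b}), X₁ = −(b+\overline{b})/4 + (b+\overline{b})/(4\overline{b}), X₂ = (b+\overline{b})/4 + (b+\overline{b})/(4\overline{b}). Then b₁ ≠ ±1, X₁ ≠ 0, X₂ ≠ 0, and (b₁ + \overline{b₁})/(\overline{b₁} − b₁ + 2) = b. -/

import Mathlib

open ComplexConjugate

/-- Inversion step in the boundary-potential representation of `L^I_{(0,b,c)}`:
given `b ≠ ±1` with `b + conj b ≠ 0`, and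
`b₁ = (2 b conj b + b - conj b)/(b + conj b)`,
`X₁ = -(b + conj b)/4 + (b + conj b)/(4 conj b)`,
`X₂ = (b + conj b)/4 + (b + conj b)/(4 conj b)`,
one has `b₁ ≠ ±1`, `X₁ ≠ 0`, `X₂ ≠ 0` and `(b₁ + conj b₁)/(conj b₁ - b₁ + 2) = b`. -/
theorem inversion_step (b : ℂ) (hb1 : b ≠ 1) (hb2 : b ≠ -1) (hre : b + conj b ≠ 0) :
    ((2 * b * conj b + b - conj b) / (b + conj b)) ≠ 1 ∧
    ((2 * b * conj b + b - conj b) / (b + conj b)) ≠ -1 ∧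
    (-((b + conj b) / 4) + (b + conj b) / (4 * conj b)) ≠ 0 ∧
    ((b + conj b) / 4 + (b + conj b) / (4 * conj b)) ≠ 0 ∧
    (((2 * b * conj b + b - conj b) / (b + conj b)) +
        conj ((2 * b * conj b + b - conj b) / (b + conj b)))
      / (conj ((2 * b * conj b + b - conj b) / (b + conj b))
          - ((2 * b * conj b + b - conj b) / (b + conj b)) + 2) = b := by
  have hb0 : b ≠ 0 := by
    intro h; apply hre; rw [h]; simp
  have hcb0 : (conj b : ℂ) ≠ 0 := by
    simpa using hb0
  have hcb1 : (conj b : ℂ) ≠ 1 := by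
    intro h; apply hb1
    have := congrArg conj h; simpa using this
  have hcb2 : (conj b : ℂ) ≠ -1 := by
    intro h; apply hb2
    have := congrArg conj h; simpa using this
  refine ⟨?_, ?_, ?_, ?_, ?_⟩
  · intro h
    rw [div_eq_one_iff_eq hre] at h
    have h2 : conj b * (b - 1) = 0 := by linear_combination h / 2
    rcases mul_eq_zero.mp h2 with h3 | h3
    · exact hcb0 h3
    · exact hb1 (by linear_combination h3)
  · intro h
    rw [div_eq_iff hre] at h
    have h2 : b * (conj b + 1) = 0 := by linear_combination h / 2
    rcases mul_eq_zero.mp h2 with h3 | h3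
    · exact hb0 h3
    · exact hcb2 (by linear_combination h3)
  · intro h
    have h2 : (b + conj b) * (1 - conj b) = 0 := by
      field_simp at h
      linear_combination h
    rcases mul_eq_zero.mp h2 with h3 | h3
    · exact hre h3
    · exact hcb1 (by linear_combination -h3)
  · intro h
    have h2 : (b + conj b) * (1 + conj b) = 0 := by
      field_simp at h
      linear_combination h
    rcases mul_eq_zero.mp h2 with h3 | h3
    · exact hre h3
    · exact hcb2 (by linear_combination h3)
  · have hs : conj (b + conj b) = b + conj b := by simp [add_comm]
    simp only [map_div₀, map_add, map_sub, map_mul, map_ofNat, Complex.conj_conj, hs]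
    have hn : (2 * b * conj b + b - conj b) / (b + conj b)
        + (2 * conj b * b + conj b - b) / (b + conj b)
        = 4 * b * conj b / (b + conj b) := by
      rw [← add_div]; ring_nf
    have hd : (2 * conj b * b + conj b - b) / (b + conj b)
        - (2 * b * conj b + b - conj b) / (b + conj b) + 2
        = 4 * conj b / (b + conj b) := by
      field_simp
      ring
    rw [hn, hd]
    rw [div_div_div_cancel_right₀ hre]
    field_simp
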